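/- Theorem 3.4 (first-order variance coefficient for fuzzy advantage): For every p ∈ (0,1), h₂″(p)/2 − h(p)·h″(p) = (1/(p(1−p))) · ( 1 − (2p−1)·log(p/(1−p)) ), where h(p) = p·log(2p) + (1−p)·log(2−2p) and h₂(p) = p·(log(2p))² + (1−p)·(log(2−2p))². (This quantity is the coefficient of Var(p₀(x)) in the first-order expansion Var(G₁) = p(1−p)(log(p/(1−p)))² + (h₂″(p)/2 − h(p)h″(p))·Var(p₀(x)) + … of the variance of the exponential rate of growth under Kelly betting with fuzzy advantage.) -/

import Mathlib

/-- `h(p) = p·log(2p) + (1-p)·log(2-2p)`, the expected one-round log-growth under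
Kelly betting at winning probability `p`. -/
noncomputable def kellyH (p : ℝ) : ℝ :=
  p * Real.log (2 * p) + (1 - p) * Real.log (2 - 2 * p)

/-- `h₂(p) = p·(log(2p))² + (1-p)·(log(2-2p))²`, the second moment of the one-round
log-growth under Kelly betting at winning probability `p`. -/
noncomputable def kellyH2 (p : ℝ) : ℝ :=
  p * (Real.log (2 * p))^2 + (1 - p) * (Real.log (2 - 2 * p))^2

lemma logA {x : ℝ} (h0 : 0 < x) :
    HasDerivAt (fun y : ℝ => Real.log (2 * y)) (1 / x) x := by
  have h : HasDerivAt (fun y : ℝ => 2 * y) 2 x := by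
    simpa using (hasDerivAt_id x).const_mul 2
  have := h.log (by positivity)
  convert this using 1
  field_simp

lemma logB {x : ℝ} (h1 : x < 1) :
    HasDerivAt (fun y : ℝ => Real.log (2 - 2 * y)) (-(1 / (1 - x))) x := by
  have h : HasDerivAt (fun y : ℝ => 2 - 2 * y) (-2) x := by
    simpa using ((hasDerivAt_id x).const_mul 2).const_sub 2
  have h2 : (2:ℝ) - 2 * x ≠ 0 := by nlinarith
  have h3 : (1:ℝ) - x ≠ 0 := by linarith
  have := h.log h2
  convert this using 1
  field_simp

lemma dH {x : ℝ} (h0 : 0 < x) (h1 : x < 1) :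
    HasDerivAt kellyH (Real.log (2 * x) - Real.log (2 - 2 * x)) x := by
  have hA := (hasDerivAt_id x).mul (logA h0)
  have hB := ((hasDerivAt_id x).const_sub 1).mul (logB h1)
  have := hA.add hB
  have hx : x ≠ 0 := ne_of_gt h0
  have hx1 : (1:ℝ) - x ≠ 0 := by linarith
  convert this using 1
  · rfl
  · rfl
  · rfl
  simp only [id]
  field_simp
  ring

lemma dH2 {x : ℝ} (h0 : 0 < x) (h1 : x < 1) :
    HasDerivAt kellyH2
      ((Real.log (2 * x))^2 + 2 * Real.log (2 * x)
        - (Real.log (2 - 2 * x))^2 - 2 * Real.log (2 - 2 * x)) x := by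
  have hA := (hasDerivAt_id x).mul ((logA h0).pow 2)
  have hB := ((hasDerivAt_id x).const_sub 1).mul ((logB h1).pow 2)
  have := hA.add hB
  have hx : x ≠ 0 := ne_of_gt h0
  have hx1 : (1:ℝ) - x ≠ 0 := by linarith
  convert this using 1
  · rfl
  · rfl
  · rfl
  simp only [id, Pi.pow_apply]
  push_cast
  field_simp
  ring

theorem kelly_fuzzy_variance_coeff (p : ℝ) (hp0 : 0 < p) (hp1 : p < 1) :
    deriv (deriv kellyH2) p / 2 - kellyH p * deriv (deriv kellyH) p
      = (1 / (p * (1 - p))) * (1 - (2 * p - 1) * Real.log (p / (1 - p))) := by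
  have hp1' : (0:ℝ) < 1 - p := by linarith
  have hmem : Set.Ioo (0:ℝ) 1 ∈ nhds p := Ioo_mem_nhds hp0 hp1
  -- second derivative of kellyH
  have hevH : deriv kellyH =ᶠ[nhds p]
      fun x => Real.log (2 * x) - Real.log (2 - 2 * x) := by
    filter_upwards [hmem] with x hx
    exact (dH hx.1 hx.2).deriv
  have hdd : HasDerivAt (fun x => Real.log (2 * x) - Real.log (2 - 2 * x))
      (1/p + 1/(1-p)) p := by
    have := (logA hp0).sub (logB hp1)
    convert this using 1
    · rfl
    · rfl
    · rfl
    ring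
  have hH'' : deriv (deriv kellyH) p = 1/p + 1/(1-p) := by
    rw [Filter.EventuallyEq.deriv_eq hevH]
    exact hdd.deriv
  -- second derivative of kellyH2
  have hevH2 : deriv kellyH2 =ᶠ[nhds p]
      fun x => (Real.log (2 * x))^2 + 2 * Real.log (2 * x)
        - (Real.log (2 - 2 * x))^2 - 2 * Real.log (2 - 2 * x) := by
    filter_upwards [hmem] with x hx
    exact (dH2 hx.1 hx.2).deriv
  have hdd2 : HasDerivAt (fun x => (Real.log (2 * x))^2 + 2 * Real.log (2 * x)
        - (Real.log (2 - 2 * x))^2 - 2 * Real.log (2 - 2 * x))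
      (((2:ℕ):ℝ) * Real.log (2*p) ^ (2-1) * (1/p) + 2 * (1/p)
        - ((2:ℕ):ℝ) * Real.log (2-2*p) ^ (2-1) * (-(1/(1-p))) - 2 * (-(1/(1-p)))) p :=
    ((((logA hp0).pow 2).add ((logA hp0).const_mul 2)).sub
      ((logB hp1).pow 2)).sub ((logB hp1).const_mul 2)
  have hH2'' : deriv (deriv kellyH2) p
      = 2 * Real.log (2*p) / p + 2 / p + 2 * Real.log (2-2*p) / (1-p) + 2 / (1-p) := by
    rw [Filter.EventuallyEq.deriv_eq hevH2, hdd2.deriv]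
    push_cast
    field_simp
    ring
  rw [hH'', hH2'', kellyH]
  have e1 : Real.log (2 * p) = Real.log 2 + Real.log p :=
    Real.log_mul two_ne_zero (ne_of_gt hp0)
  have e2 : Real.log (2 - 2 * p) = Real.log 2 + Real.log (1 - p) := by
    rw [show (2:ℝ) - 2*p = 2 * (1-p) by ring]
    exact Real.log_mul two_ne_zero (ne_of_gt hp1')
  have e3 : Real.log (p / (1 - p)) = Real.log p - Real.log (1 - p) :=
    Real.log_div (ne_of_gt hp0) (ne_of_gt hp1')
  rw [e1, e2, e3]
  field_simp
  ring
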